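/- Let N ≥ 2 and for each i ∈ {1,…,N} let (𝟙_{S_{i,t}})_{t≥1} be an i.i.d. sequence of Bernoulli random variables with success probability p_i ∈ (0,1], where p_i ≥ p̂/N for a constant p̂ ∈ (1,2]. Let Γ_k(i) = ∑_{t=1}^k 𝟙_{S_{i,t}} and α_{k,i} = 1/Γ_k(i) (on the event Γ_k(i) ≥ 1, which almost surely holds for all large k). Then for every i the following hold with probability one: (a) ∑_{k=1}^∞ α_{k,i}/k < ∞; (b) ∑_{k=1}^∞ α_{k,i}² < ∞; (c) ∑_{k=1}^∞ |α_{k,i} − 1/(k p_i)| < ∞. -/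

import Mathlib

open MeasureTheory ProbabilityTheory

section stmt10auxlemmas
open Filter Real




lemma aux_exp_quad {x : ℝ} (hx : |x| ≤ 1) : Real.exp x ≤ 1 + x + x ^ 2 := by
  have h := Real.exp_bound hx (n := 2) (by norm_num)
  have hsum : ∑ m ∈ Finset.range 2, x ^ m / m.factorial = 1 + x := by
    simp [Finset.sum_range_succ]
  rw [hsum] at h
  have h2 := (abs_sub_le_iff.mp h).1
  have h3 : |x| ^ 2 = x ^ 2 := sq_abs x
  rw [h3] at h2
  norm_num [Nat.factorial] at h2
  nlinarith [sq_nonneg x]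

lemma aux_exp_ge {x : ℝ} (hx : 0 ≤ x) : (x / 4) ^ 4 ≤ Real.exp x := by
  have h1 : x / 4 ≤ Real.exp (x / 4) := by
    have := Real.add_one_le_exp (x / 4); linarith
  calc (x / 4) ^ 4 ≤ Real.exp (x / 4) ^ 4 := by
        apply pow_le_pow_left₀ (by positivity) h1
    _ = Real.exp x := by rw [← Real.exp_nat_mul]; congr 1; push_cast; ring

lemma aux_summable_of_tail {f g : ℕ → ℝ} (hf : ∀ k, 0 ≤ f k) (hg : Summable g)
    {K : ℕ} (h : ∀ k, K ≤ k → f k ≤ g k) : Summable f := by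
  rw [← summable_nat_add_iff K]
  exact Summable.of_nonneg_of_le (fun n => hf _) (fun n => h _ (Nat.le_add_left K n))
    ((summable_nat_add_iff K).mpr hg)

lemma aux_mgf_bound {Ω : Type*} [MeasurableSpace Ω] (μ : Measure Ω) [IsProbabilityMeasure μ]
    {Y : Ω → ℝ} (hm : Measurable Y) (hb : ∀ ω, |Y ω| ≤ 1)
    (h0 : ∫ ω, Y ω ∂μ = 0) {u : ℝ} (hu : |u| ≤ 1) :
    mgf Y μ u ≤ Real.exp (u ^ 2) := by
  have hYint : Integrable Y μ :=
    (integrable_const 1).mono' hm.aestronglyMeasurable (ae_of_all _ fun ω => by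
      simpa using hb ω)
  have hY2int : Integrable (fun ω => Y ω ^ 2) μ :=
    (integrable_const 1).mono' (hm.pow_const 2).aestronglyMeasurable (ae_of_all _ fun ω => by
      have h := hb ω
      rw [Real.norm_eq_abs, abs_pow]
      calc |Y ω| ^ 2 ≤ 1 ^ 2 := by gcongr
        _ = 1 := one_pow 2)
  have hRHSint : Integrable (fun ω => 1 + u * Y ω + u ^ 2 * Y ω ^ 2) μ :=
    ((integrable_const 1).add (hYint.const_mul u)).add (hY2int.const_mul (u ^ 2))
  have hexpint : Integrable (fun ω => Real.exp (u * Y ω)) μ :=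
    (integrable_const (Real.exp 1)).mono' ((hm.const_mul u).exp).aestronglyMeasurable
      (ae_of_all _ fun ω => by
        rw [Real.norm_eq_abs, Real.abs_exp, Real.exp_le_exp]
        calc u * Y ω ≤ |u * Y ω| := le_abs_self _
          _ = |u| * |Y ω| := abs_mul u (Y ω)
          _ ≤ 1 := mul_le_one₀ hu (abs_nonneg _) (hb ω))
  have hpt : ∀ ω, Real.exp (u * Y ω) ≤ 1 + u * Y ω + u ^ 2 * Y ω ^ 2 := fun ω => by
    have h1 : |u * Y ω| ≤ 1 := by
      rw [abs_mul]
      exact mul_le_one₀ hu (abs_nonneg _) (hb ω)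
    have := aux_exp_quad h1
    calc Real.exp (u * Y ω) ≤ 1 + u * Y ω + (u * Y ω) ^ 2 := this
      _ = 1 + u * Y ω + u ^ 2 * Y ω ^ 2 := by ring
  have hEY2 : ∫ ω, Y ω ^ 2 ∂μ ≤ 1 := by
    calc ∫ ω, Y ω ^ 2 ∂μ ≤ ∫ _ω, (1 : ℝ) ∂μ := by
          apply integral_mono hY2int (integrable_const 1)
          intro ω
          have h := hb ω
          calc Y ω ^ 2 = |Y ω| ^ 2 := (sq_abs _).symm
            _ ≤ 1 ^ 2 := by gcongr
            _ = 1 := one_pow 2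
      _ = 1 := by simp
  calc mgf Y μ u = ∫ ω, Real.exp (u * Y ω) ∂μ := rfl
    _ ≤ ∫ ω, (1 + u * Y ω + u ^ 2 * Y ω ^ 2) ∂μ := integral_mono hexpint hRHSint hpt
    _ = 1 + u * ∫ ω, Y ω ∂μ + u ^ 2 * ∫ ω, Y ω ^ 2 ∂μ := by
        have e1 : ∫ ω, ((1 + u * Y ω) + u ^ 2 * Y ω ^ 2) ∂μ =
            (∫ ω, (1 + u * Y ω) ∂μ) + ∫ ω, u ^ 2 * Y ω ^ 2 ∂μ :=
          integral_add ((integrable_const 1).add (hYint.const_mul u)) (hY2int.const_mul (u ^ 2))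
        have e2 : ∫ ω, ((1 : ℝ) + u * Y ω) ∂μ = (∫ _ω, (1 : ℝ) ∂μ) + ∫ ω, u * Y ω ∂μ :=
          integral_add (integrable_const 1) (hYint.const_mul u)
        rw [e1, e2, MeasureTheory.integral_const_mul, MeasureTheory.integral_const_mul]
        simp
    _ ≤ 1 + u ^ 2 := by
        rw [h0, mul_zero, add_zero]
        have : u ^ 2 * ∫ ω, Y ω ^ 2 ∂μ ≤ u ^ 2 * 1 := by
          apply mul_le_mul_of_nonneg_left hEY2 (sq_nonneg u)
        linarith
    _ ≤ Real.exp (u ^ 2) := by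
        have := Real.add_one_le_exp (u ^ 2); linarith




lemma aux_tail (q : ℝ) (hq0 : 0 < q) (G : ℕ → ℝ) (hG : ∀ k, 0 ≤ G k)
    (K : ℕ) (hK1 : 1 ≤ K)
    (hclose : ∀ k, K ≤ k → |G k - k * q| ≤ (k : ℝ) ^ (3/4 : ℝ))
    (hsmall : ∀ k, K ≤ k → (k : ℝ) ^ (3/4 : ℝ) ≤ k * q / 2) :
    Summable (fun k : ℕ => (G k)⁻¹ / k) ∧ Summable (fun k : ℕ => ((G k)⁻¹) ^ 2) ∧
      Summable (fun k : ℕ => |(G k)⁻¹ - 1 / (k * q)|) := by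
  have hbase : ∀ k : ℕ, K ≤ k → (1 : ℝ) ≤ k ∧ (k : ℝ) * q / 2 ≤ G k ∧ 0 < G k ∧
      (G k)⁻¹ ≤ 2 / ((k : ℝ) * q) := by
    intro k hk
    have hk1 : (1 : ℝ) ≤ (k : ℝ) := by exact_mod_cast le_trans hK1 hk
    have hk0 : (0 : ℝ) < k := lt_of_lt_of_le one_pos hk1
    have h1 := hclose k hk
    have h2 := hsmall k hk
    have h3 : -( (k : ℝ) ^ (3/4 : ℝ)) ≤ G k - k * q := (abs_le.mp h1).1
    have hGlb : (k : ℝ) * q / 2 ≤ G k := by nlinarith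
    have hGpos : 0 < G k := lt_of_lt_of_le (by positivity) hGlb
    refine ⟨hk1, hGlb, hGpos, ?_⟩
    have : (G k)⁻¹ ≤ ((k : ℝ) * q / 2)⁻¹ := by
      apply inv_anti₀ (by positivity) hGlb
    calc (G k)⁻¹ ≤ ((k : ℝ) * q / 2)⁻¹ := this
      _ = 2 / ((k : ℝ) * q) := by rw [inv_div]
  have hsq : Summable (fun k : ℕ => 1 / (k : ℝ) ^ 2) := by
    exact_mod_cast summable_one_div_nat_pow.mpr one_lt_two
  refine ⟨?_, ?_, ?_⟩
  · apply aux_summable_of_tail (K := K)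
      (g := fun k : ℕ => (2 / q) * (1 / (k : ℝ) ^ 2))
      (fun k => div_nonneg (inv_nonneg.mpr (hG k)) (Nat.cast_nonneg k))
      (hsq.mul_left _)
    intro k hk
    obtain ⟨hk1, hGlb, hGpos, hinv⟩ := hbase k hk
    have hk0 : (0 : ℝ) < k := lt_of_lt_of_le one_pos hk1
    calc (G k)⁻¹ / k ≤ (2 / ((k : ℝ) * q)) / k := by gcongr
      _ = (2 / q) * (1 / (k : ℝ) ^ 2) := by field_simp
  · apply aux_summable_of_tail (K := K)
      (g := fun k : ℕ => (4 / q ^ 2) * (1 / (k : ℝ) ^ 2))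
      (fun k => sq_nonneg _) (hsq.mul_left _)
    intro k hk
    obtain ⟨hk1, hGlb, hGpos, hinv⟩ := hbase k hk
    have hk0 : (0 : ℝ) < k := lt_of_lt_of_le one_pos hk1
    calc ((G k)⁻¹) ^ 2 ≤ (2 / ((k : ℝ) * q)) ^ 2 := by
          gcongr
      _ = (4 / q ^ 2) * (1 / (k : ℝ) ^ 2) := by field_simp; ring
  · apply aux_summable_of_tail (K := K)
      (g := fun k : ℕ => (2 / q ^ 2) * (k : ℝ) ^ (-(5/4) : ℝ))
      (fun k => abs_nonneg _)
      ((Real.summable_nat_rpow.mpr (by norm_num)).mul_left _)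
    intro k hk
    obtain ⟨hk1, hGlb, hGpos, hinv⟩ := hbase k hk
    have hk0 : (0 : ℝ) < k := lt_of_lt_of_le one_pos hk1
    have hkq : (0 : ℝ) < (k : ℝ) * q := by positivity
    have heq : (G k)⁻¹ - 1 / ((k : ℝ) * q) = ((k : ℝ) * q - G k) / (G k * ((k : ℝ) * q)) := by
      field_simp
    rw [heq, abs_div, abs_sub_comm,
      abs_of_pos (show (0:ℝ) < G k * ((k : ℝ) * q) by positivity)]
    have hnum : |G k - (k : ℝ) * q| ≤ (k : ℝ) ^ (3/4 : ℝ) := hclose k hk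
    have hden : (k : ℝ) * q / 2 * ((k : ℝ) * q) ≤ G k * ((k : ℝ) * q) := by gcongr
    calc |G k - (k : ℝ) * q| / (G k * ((k : ℝ) * q))
        ≤ (k : ℝ) ^ (3/4 : ℝ) / ((k : ℝ) * q / 2 * ((k : ℝ) * q)) := by
          gcongr
      _ = (2 / q ^ 2) * ((k : ℝ) ^ (3/4 : ℝ) / (k : ℝ) ^ 2) := by field_simp
      _ = (2 / q ^ 2) * (k : ℝ) ^ (-(5/4) : ℝ) := by
          congr 1
          rw [← Real.rpow_natCast (k : ℝ) 2, ← Real.rpow_sub hk0]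
          norm_num




lemma aux_chernoff {Ω : Type*} [MeasurableSpace Ω] (μ : Measure Ω) [IsProbabilityMeasure μ]
    (Y : ℕ → Ω → ℝ) (hYmeas : ∀ t, Measurable (Y t))
    (hYind : iIndepFun Y μ)
    (hmgf : ∀ t (u : ℝ), |u| ≤ 1 → mgf (Y t) μ u ≤ Real.exp (u ^ 2))
    (hint : ∀ (u : ℝ) t, Integrable (fun ω => Real.exp (u * Y t ω)) μ)
    (k : ℕ) (hk : 1 ≤ k) :
    μ {ω | (k : ℝ) ^ (3/4 : ℝ) ≤ |(∑ t ∈ Finset.Icc 1 k, Y t) ω|} ≤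
      ENNReal.ofReal (2 * Real.exp (-((k : ℝ) ^ (1/2 : ℝ)) / 4)) := by
  have hkr1 : (1 : ℝ) ≤ (k : ℝ) := by exact_mod_cast hk
  have hkr0 : (0 : ℝ) < (k : ℝ) := lt_of_lt_of_le one_pos hkr1
  set ε : ℝ := (k : ℝ) ^ (3/4 : ℝ) with hεdef
  have hε0 : 0 < ε := Real.rpow_pos_of_pos hkr0 _
  set u : ℝ := ε / (2 * (k : ℝ)) with hudef
  have hu0 : 0 < u := by positivity
  have hu1 : u ≤ 1 := by
    have hεk : ε ≤ (k : ℝ) := by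
      calc ε ≤ (k : ℝ) ^ (1 : ℝ) := Real.rpow_le_rpow_of_exponent_le hkr1 (by norm_num)
        _ = (k : ℝ) := Real.rpow_one _
    rw [hudef, div_le_one (by positivity)]
    nlinarith
  have hmgfT : ∀ v : ℝ, |v| ≤ 1 →
      mgf (∑ t ∈ Finset.Icc 1 k, Y t) μ v ≤ Real.exp ((k : ℝ) * v ^ 2) := by
    intro v hv
    rw [hYind.mgf_sum hYmeas]
    calc ∏ t ∈ Finset.Icc 1 k, mgf (Y t) μ v
        ≤ ∏ _t ∈ Finset.Icc 1 k, Real.exp (v ^ 2) :=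
          Finset.prod_le_prod (fun t _ => mgf_nonneg) (fun t _ => hmgf t v hv)
      _ = Real.exp (v ^ 2) ^ k := by rw [Finset.prod_const, Nat.card_Icc]; norm_num
      _ = Real.exp ((k : ℝ) * v ^ 2) := by rw [← Real.exp_nat_mul]
  have hintT : ∀ v : ℝ, Integrable (fun ω => Real.exp (v * (∑ t ∈ Finset.Icc 1 k, Y t) ω)) μ :=
    fun v => hYind.integrable_exp_mul_sum hYmeas (fun t _ => hint v t)
  have habsu : |u| ≤ 1 := by rw [abs_of_pos hu0]; exact hu1
  have habsu' : |(-u)| ≤ 1 := by rw [abs_neg]; exact habsu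
  have hup : (μ {ω | ε ≤ (∑ t ∈ Finset.Icc 1 k, Y t) ω}).toReal ≤
      Real.exp ((k : ℝ) * u ^ 2 - u * ε) := by
    calc (μ {ω | ε ≤ (∑ t ∈ Finset.Icc 1 k, Y t) ω}).toReal
        ≤ Real.exp (-u * ε) * mgf (∑ t ∈ Finset.Icc 1 k, Y t) μ u :=
          measure_ge_le_exp_mul_mgf ε hu0.le (hintT u)
      _ ≤ Real.exp (-u * ε) * Real.exp ((k : ℝ) * u ^ 2) := by
          have := hmgfT u habsu
          exact mul_le_mul_of_nonneg_left this (Real.exp_pos _).le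
      _ = Real.exp ((k : ℝ) * u ^ 2 - u * ε) := by rw [← Real.exp_add]; ring_nf
  have hdown : (μ {ω | (∑ t ∈ Finset.Icc 1 k, Y t) ω ≤ -ε}).toReal ≤
      Real.exp ((k : ℝ) * u ^ 2 - u * ε) := by
    calc (μ {ω | (∑ t ∈ Finset.Icc 1 k, Y t) ω ≤ -ε}).toReal
        ≤ Real.exp (-(-u) * (-ε)) * mgf (∑ t ∈ Finset.Icc 1 k, Y t) μ (-u) :=
          measure_le_le_exp_mul_mgf (-ε) (neg_nonpos.mpr hu0.le) (hintT (-u))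
      _ ≤ Real.exp (-(-u) * (-ε)) * Real.exp ((k : ℝ) * (-u) ^ 2) := by
          have := hmgfT (-u) habsu'
          exact mul_le_mul_of_nonneg_left this (Real.exp_pos _).le
      _ = Real.exp ((k : ℝ) * u ^ 2 - u * ε) := by rw [← Real.exp_add]; ring_nf
  have hexp_eq : (k : ℝ) * u ^ 2 - u * ε = -((k : ℝ) ^ (1/2 : ℝ)) / 4 := by
    have hε2 : ε ^ 2 = (k : ℝ) ^ (3/2 : ℝ) := by
      rw [hεdef, ← Real.rpow_natCast ((k : ℝ) ^ (3/4 : ℝ)) 2, ← Real.rpow_mul hkr0.le]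
      norm_num
    have h32 : (k : ℝ) ^ (1/2 : ℝ) * (k : ℝ) ^ (1 : ℝ) = (k : ℝ) ^ (3/2 : ℝ) := by
      rw [← Real.rpow_add hkr0]; norm_num
    rw [Real.rpow_one] at h32
    have h1 : (k : ℝ) * u ^ 2 - u * ε = -(ε ^ 2) / (4 * (k : ℝ)) := by
      rw [hudef]; field_simp; ring
    rw [h1, hε2, ← h32]
    field_simp
  have hsub : {ω | ε ≤ |(∑ t ∈ Finset.Icc 1 k, Y t) ω|} ⊆
      {ω | ε ≤ (∑ t ∈ Finset.Icc 1 k, Y t) ω} ∪ {ω | (∑ t ∈ Finset.Icc 1 k, Y t) ω ≤ -ε} := by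
    intro ω hω
    simp only [Set.mem_setOf_eq] at hω
    rcases le_abs.mp hω with h | h
    · exact Or.inl h
    · exact Or.inr (by simp only [Set.mem_setOf_eq]; linarith)
  calc μ {ω | ε ≤ |(∑ t ∈ Finset.Icc 1 k, Y t) ω|}
      ≤ μ {ω | ε ≤ (∑ t ∈ Finset.Icc 1 k, Y t) ω} +
        μ {ω | (∑ t ∈ Finset.Icc 1 k, Y t) ω ≤ -ε} :=
        (measure_mono hsub).trans (measure_union_le _ _)
    _ ≤ ENNReal.ofReal (Real.exp (-((k : ℝ) ^ (1/2 : ℝ)) / 4)) +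
        ENNReal.ofReal (Real.exp (-((k : ℝ) ^ (1/2 : ℝ)) / 4)) := by
        gcongr
        · rw [← ENNReal.ofReal_toReal (measure_ne_top μ _)]
          exact ENNReal.ofReal_le_ofReal (hup.trans_eq (by rw [hexp_eq]))
        · rw [← ENNReal.ofReal_toReal (measure_ne_top μ _)]
          exact ENNReal.ofReal_le_ofReal (hdown.trans_eq (by rw [hexp_eq]))
    _ = ENNReal.ofReal (2 * Real.exp (-((k : ℝ) ^ (1/2 : ℝ)) / 4)) := by
        rw [← ENNReal.ofReal_add (Real.exp_pos _).le (Real.exp_pos _).le]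
        congr 1
        ring




section stmt10aux

lemma aux_csummable : Summable (fun k : ℕ => 2 * Real.exp (-((k : ℝ) ^ (1/2 : ℝ)) / 4)) := by
  have hsq : Summable (fun k : ℕ => 1 / (k : ℝ) ^ 2) := by
    exact_mod_cast summable_one_div_nat_pow.mpr one_lt_two
  apply aux_summable_of_tail (K := 1) (g := fun k : ℕ => 131072 * (1 / (k : ℝ) ^ 2))
    (fun k => by positivity) (hsq.mul_left _)
  intro k hk
  have hkr1 : (1 : ℝ) ≤ (k : ℝ) := by exact_mod_cast hk
  have hkr0 : (0 : ℝ) < (k : ℝ) := lt_of_lt_of_le one_pos hkr1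
  set x : ℝ := (k : ℝ) ^ (1/2 : ℝ) with hxdef
  have hx0 : 0 < x := Real.rpow_pos_of_pos hkr0 _
  have h1 : (x / 4 / 4) ^ 4 ≤ Real.exp (x / 4) := aux_exp_ge (by positivity)
  have h2 : x ^ 4 = (k : ℝ) ^ 2 := by
    rw [hxdef, ← Real.rpow_natCast ((k : ℝ) ^ (1/2 : ℝ)) 4, ← Real.rpow_mul hkr0.le,
      ← Real.rpow_natCast (k : ℝ) 2]
    norm_num
  have h3 : (k : ℝ) ^ 2 / 65536 ≤ Real.exp (x / 4) := by
    calc (k : ℝ) ^ 2 / 65536 = (k : ℝ) ^ 2 / 256 / 256 := by rw [div_div]; norm_num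
      _ = (x / 4 / 4) ^ 4 := by rw [div_pow, div_pow, h2]; norm_num
      _ ≤ Real.exp (x / 4) := h1
  have h4 : Real.exp (-x / 4) ≤ 65536 / (k : ℝ) ^ 2 := by
    rw [neg_div, Real.exp_neg, inv_le_comm₀ (Real.exp_pos _) (by positivity), inv_div]
    exact h3
  calc 2 * Real.exp (-x / 4) ≤ 2 * (65536 / (k : ℝ) ^ 2) := by gcongr
    _ = 131072 * (1 / (k : ℝ) ^ 2) := by ring

end stmt10aux


end stmt10auxlemmas

open Filter Real in
/-- With `S_{i,t}`, `Γ_k(i)` and the uncoordinated stepsizes `α_{k,i} = 1/Γ_k(i)`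
as in the gossip algorithm (i.i.d. update indicators with success probabilities
`p_i ≥ p̂/N`, `p̂ ∈ (1,2]`), for every `i` the following hold with probability one:
(a) `∑_k α_{k,i}/k < ∞`; (b) `∑_k α_{k,i}² < ∞`; (c) `∑_k |α_{k,i} − 1/(k p_i)| < ∞`. -/
theorem stmt_10 {Ω : Type*} [MeasurableSpace Ω] (μ : Measure Ω) [IsProbabilityMeasure μ]
    (N : ℕ) (hN : 2 ≤ N) (p : Fin N → ℝ) (phat : ℝ)
    (hphat1 : 1 < phat) (hphat2 : phat ≤ 2)
    (hp0 : ∀ i, 0 < p i) (hp1 : ∀ i, p i ≤ 1) (hplb : ∀ i, phat / N ≤ p i)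
    (S : Fin N → ℕ → Set Ω) (hSm : ∀ i t, MeasurableSet (S i t))
    (hindep : ∀ i, iIndepSet (fun t => S i t) μ)
    (hprob : ∀ i t, μ (S i t) = ENNReal.ofReal (p i))
    (Γ : ℕ → Fin N → Ω → ℝ)
    (hΓ : ∀ k i ω, Γ k i ω = ∑ t ∈ Finset.Icc 1 k, (S i t).indicator (fun _ => (1 : ℝ)) ω)
    (α : ℕ → Fin N → Ω → ℝ) (hα : ∀ k i ω, α k i ω = (Γ k i ω)⁻¹) :
    ∀ i, ∀ᵐ ω ∂μ,
      Summable (fun k => α k i ω / k) ∧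
      Summable (fun k => (α k i ω) ^ 2) ∧
      Summable (fun k => |α k i ω - 1 / (k * p i)|) := by
  intro i
  have hq0 : 0 < p i := hp0 i
  have hq1 : p i ≤ 1 := hp1 i
  -- the indicator variables and their centered versions
  set X : ℕ → Ω → ℝ := fun t => (S i t).indicator (fun _ => (1 : ℝ)) with hXdef
  have hXmeas : ∀ t, Measurable (X t) := fun t => measurable_const.indicator (hSm i t)
  have hX01 : ∀ t ω, X t ω = 0 ∨ X t ω = 1 := fun t ω => by
    by_cases h : ω ∈ S i t
    · right; simp [hXdef, Set.indicator_of_mem h]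
    · left; simp [hXdef, Set.indicator_of_notMem h]
  have hXint : ∀ t, Integrable (X t) μ := fun t =>
    (integrable_const 1).mono' (hXmeas t).aestronglyMeasurable (ae_of_all _ fun ω => by
      rcases hX01 t ω with h | h <;> simp [h])
  have hXmean : ∀ t, ∫ ω, X t ω ∂μ = p i := fun t => by
    have h : ∫ ω, (S i t).indicator (fun _ => (1 : ℝ)) ω ∂μ = (μ (S i t)).toReal :=
      integral_indicator_one (hSm i t)
    rw [hXdef] at *
    rw [h, hprob i t, ENNReal.toReal_ofReal hq0.le]
  set Y : ℕ → Ω → ℝ := fun t ω => X t ω - p i with hYdef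
  have hYmeas : ∀ t, Measurable (Y t) := fun t => (hXmeas t).sub measurable_const
  have hYind : iIndepFun Y μ := by
    have h := (hindep i).iIndepFun_indicator (m := (inferInstance : MeasurableSpace ℝ))
    exact h.comp (fun _ => fun x => x - p i) (fun _ => measurable_id.sub measurable_const)
  have hYbound : ∀ t ω, |Y t ω| ≤ 1 := fun t ω => by
    rcases hX01 t ω with h | h <;>
      · simp only [hYdef, h]
        rw [abs_le]
        constructor <;> linarith
  have hYmean : ∀ t, ∫ ω, Y t ω ∂μ = 0 := fun t => by
    rw [hYdef]
    rw [integral_sub (hXint t) (integrable_const _), hXmean t, integral_const]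
    simp
  have hmgfY : ∀ t (u : ℝ), |u| ≤ 1 → mgf (Y t) μ u ≤ Real.exp (u ^ 2) := fun t u hu =>
    aux_mgf_bound μ (hYmeas t) (hYbound t) (hYmean t) hu
  have hYexp_int : ∀ (u : ℝ) t, Integrable (fun ω => Real.exp (u * Y t ω)) μ := fun u t =>
    (integrable_const (Real.exp |u|)).mono' (((hYmeas t).const_mul u).exp).aestronglyMeasurable
      (ae_of_all _ fun ω => by
        rw [Real.norm_eq_abs, Real.abs_exp, Real.exp_le_exp]
        calc u * Y t ω ≤ |u * Y t ω| := le_abs_self _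
          _ = |u| * |Y t ω| := abs_mul _ _
          _ ≤ |u| * 1 := by gcongr; exact hYbound t ω
          _ = |u| := mul_one _)
  -- the bad events
  set A : ℕ → Set Ω :=
    fun k => {ω | (k : ℝ) ^ (3/4 : ℝ) ≤ |Γ k i ω - (k : ℝ) * p i|} with hAdef
  have hTeq : ∀ k (ω : Ω), (∑ t ∈ Finset.Icc 1 k, Y t) ω = Γ k i ω - (k : ℝ) * p i := by
    intro k ω
    rw [hΓ]
    simp only [Finset.sum_apply, hYdef, hXdef, Finset.sum_sub_distrib, Finset.sum_const,
      Nat.card_Icc, smul_eq_mul]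
    push_cast
    ring_nf
  have hkey : ∀ k : ℕ, μ (A k) ≤
      ENNReal.ofReal (2 * Real.exp (-((k : ℝ) ^ (1/2 : ℝ)) / 4)) := by
    intro k
    rcases Nat.eq_zero_or_pos k with hk | hk
    · subst hk
      calc μ (A 0) ≤ 1 := prob_le_one
        _ ≤ ENNReal.ofReal (2 * Real.exp (-((0 : ℕ) : ℝ) ^ (1/2 : ℝ) / 4)) := by
            simp only [Nat.cast_zero]
            rw [Real.zero_rpow (by norm_num : (1/2:ℝ) ≠ 0), neg_zero, zero_div,
              Real.exp_zero, mul_one]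
            exact ENNReal.one_le_ofReal.mpr (by norm_num)
    · have h := aux_chernoff μ Y hYmeas hYind hmgfY hYexp_int k hk
      have heq : A k = {ω | (k : ℝ) ^ (3/4 : ℝ) ≤ |(∑ t ∈ Finset.Icc 1 k, Y t) ω|} := by
        ext ω; simp only [hAdef, Set.mem_setOf_eq, hTeq k ω]
      rw [heq]
      exact h
  have htsum : (∑' k, μ (A k)) ≠ ⊤ := by
    have h1 : (∑' k, μ (A k)) ≤
        ∑' k : ℕ, ENNReal.ofReal (2 * Real.exp (-((k : ℝ) ^ (1/2 : ℝ)) / 4)) :=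
      ENNReal.tsum_le_tsum hkey
    have h2 : ∑' k : ℕ, ENNReal.ofReal (2 * Real.exp (-((k : ℝ) ^ (1/2 : ℝ)) / 4)) =
        ENNReal.ofReal (∑' k : ℕ, 2 * Real.exp (-((k : ℝ) ^ (1/2 : ℝ)) / 4)) :=
      (ENNReal.ofReal_tsum_of_nonneg (fun k => by positivity) aux_csummable).symm
    rw [h2] at h1
    exact ne_top_of_le_ne_top ENNReal.ofReal_ne_top h1
  -- deterministic eventual smallness
  have hdet : ∀ᶠ k : ℕ in atTop, (k : ℝ) ^ (3/4 : ℝ) ≤ (k : ℝ) * p i / 2 := by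
    have ht : Tendsto (fun k : ℕ => ((k : ℝ)) ^ (-(1/4) : ℝ)) atTop (nhds 0) :=
      (tendsto_rpow_neg_atTop (by norm_num)).comp tendsto_natCast_atTop_atTop
    filter_upwards [ht.eventually_lt_const (half_pos hq0), eventually_ge_atTop 1] with k h1 h2
    have hkr1 : (1 : ℝ) ≤ (k : ℝ) := by exact_mod_cast h2
    have hkr0 : (0 : ℝ) < (k : ℝ) := lt_of_lt_of_le one_pos hkr1
    have heq : (k : ℝ) ^ (3/4 : ℝ) = (k : ℝ) * (k : ℝ) ^ (-(1/4) : ℝ) := by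
      rw [show (3/4 : ℝ) = 1 + (-(1/4)) by norm_num, Real.rpow_add hkr0, Real.rpow_one]
    rw [heq]
    calc (k : ℝ) * (k : ℝ) ^ (-(1/4) : ℝ) ≤ (k : ℝ) * (p i / 2) := by gcongr
      _ = (k : ℝ) * p i / 2 := by ring
  filter_upwards [MeasureTheory.ae_eventually_notMem htsum] with ω hω
  rw [eventually_atTop] at hω hdet
  obtain ⟨K₁, hK₁⟩ := hω
  obtain ⟨K₂, hK₂⟩ := hdet
  set K : ℕ := max (max K₁ K₂) 1 with hKdef
  have hΓnn : ∀ k, 0 ≤ Γ k i ω := fun k => by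
    rw [hΓ]
    exact Finset.sum_nonneg fun t _ => Set.indicator_nonneg (fun _ _ => zero_le_one) _
  have hclose : ∀ k, K ≤ k → |Γ k i ω - (k : ℝ) * p i| ≤ (k : ℝ) ^ (3/4 : ℝ) := by
    intro k hk
    have h := hK₁ k (le_trans (le_trans (le_max_left _ _) (le_max_left _ _)) hk)
    simp only [hAdef, Set.mem_setOf_eq, not_le] at h
    exact h.le
  have hsmall : ∀ k, K ≤ k → (k : ℝ) ^ (3/4 : ℝ) ≤ (k : ℝ) * p i / 2 := fun k hk =>
    hK₂ k (le_trans (le_trans (le_max_right _ _) (le_max_left _ _)) hk)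
  obtain ⟨ha, hb, hc⟩ := aux_tail (p i) hq0 (fun k => Γ k i ω) hΓnn K
    (le_max_right _ _) hclose hsmall
  refine ⟨?_, ?_, ?_⟩
  · exact ha.congr fun k => by rw [hα]
  · exact hb.congr fun k => by rw [hα]
  · exact hc.congr fun k => by rw [hα]
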